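/- Let (X,T) be a topological dynamical system such that the set M_p of T-periodic measures is dense in M(T) (in the weak topology). Then, for each s ∈ (0,1), the set FD = {μ ∈ M(T) : D⁻_μ(s) = 0} is a residual subset of M(T). -/

import Mathlib

open MeasureTheory Filter Topology Metric Set
open scoped ENNReal NNReal

section Defs

variable {X : Type*} [MetricSpace X] [MeasurableSpace X]

/-- The topological support of a Borel measure on a metric space: the set of points all of whose
balls have positive measure. -/
def msupp (μ : Measure X) : Set X := {x : X | ∀ ε > 0, 0 < μ (ball x ε)}

/-- The energy function `I_μ(q, ε) = ∫_{supp μ} μ(B(x,ε))^(q-1) dμ(x)`. -/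
noncomputable def energyI (μ : Measure X) (q ε : ℝ) : ℝ :=
  ∫ x in msupp μ, (μ (ball x ε)).toReal ^ (q - 1) ∂μ

/-- The lower `q`-generalized fractal dimension
`D⁻_μ(q) = liminf_{ε→0⁺} log I_μ(q,ε) / ((q-1) log ε)` (as an extended real number). -/
noncomputable def Dlower (μ : Measure X) (q : ℝ) : EReal :=
  liminf (fun ε : ℝ =>
    ((Real.log (energyI μ q ε) / ((q - 1) * Real.log ε) : ℝ) : EReal)) (𝓝[>] (0 : ℝ))

/-- The upper `q`-generalized fractal dimension
`D⁺_μ(q) = limsup_{ε→0⁺} log I_μ(q,ε) / ((q-1) log ε)` (as an extended real number). -/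
noncomputable def Dupper (μ : Measure X) (q : ℝ) : EReal :=
  limsup (fun ε : ℝ =>
    ((Real.log (energyI μ q ε) / ((q - 1) * Real.log ε) : ℝ) : EReal)) (𝓝[>] (0 : ℝ))

/-- `∫_{supp μ} log μ(B(x,ε)) dμ(x)`, the numerator in the entropy dimension. -/
noncomputable def entNum (μ : Measure X) (ε : ℝ) : ℝ :=
  ∫ x in msupp μ, Real.log (μ (ball x ε)).toReal ∂μ

/-- The lower entropy dimension
`D⁻_μ(1) = liminf_{ε→0⁺} (∫_{supp μ} log μ(B(x,ε)) dμ(x)) / log ε`. -/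
noncomputable def D1lower (μ : Measure X) : EReal :=
  liminf (fun ε : ℝ => ((entNum μ ε / Real.log ε : ℝ) : EReal)) (𝓝[>] (0 : ℝ))

/-- The upper entropy dimension
`D⁺_μ(1) = limsup_{ε→0⁺} (∫_{supp μ} log μ(B(x,ε)) dμ(x)) / log ε`. -/
noncomputable def D1upper (μ : Measure X) : EReal :=
  limsup (fun ε : ℝ => ((entNum μ ε / Real.log ε : ℝ) : EReal)) (𝓝[>] (0 : ℝ))

/-- A measure is `T`-invariant if `μ(T⁻¹ s) = μ s` for every measurable `s`. -/
def IsInvariantMeasure (T : X → X) (μ : Measure X) : Prop :=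
  ∀ s : Set X, MeasurableSet s → μ (T ⁻¹' s) = μ s

/-- `M(T)`: the set of `T`-invariant Borel probability measures on `X`. -/
def invSet (T : X → X) : Set (ProbabilityMeasure X) :=
  {μ : ProbabilityMeasure X | IsInvariantMeasure T μ.toMeasure}

/-- A `T`-periodic measure: `μ = (1/k) ∑_{i<k} δ_{T^i x}` for a `T`-periodic point `x`
of period `k`. -/
def IsPeriodicMeasure (T : X → X) (μ : ProbabilityMeasure X) : Prop :=
  ∃ (x : X) (k : ℕ), 0 < k ∧ T^[k] x = x ∧
    μ.toMeasure = (k : ℝ≥0∞)⁻¹ • ∑ i ∈ Finset.range k, Measure.dirac (T^[i] x)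

/-- The upper Hausdorff dimension of a measure:
`dim_H^+(μ) = inf {dimH E | E Borel, μ(X \ E) = 0}`. -/
noncomputable def dimHplus (μ : Measure X) : ℝ≥0∞ :=
  ⨅ (E : Set X) (_ : MeasurableSet E) (_ : μ Eᶜ = 0), dimH E

/-- The lower Hausdorff dimension of a measure:
`dim_H^-(μ) = inf {dimH E | E Borel, μ(E) > 0}`. -/
noncomputable def dimHminus (μ : Measure X) : ℝ≥0∞ :=
  ⨅ (E : Set X) (_ : MeasurableSet E) (_ : 0 < μ E), dimH E

/-- The return time `τ_s(x) = inf {k ≥ 1 | T^k x ∈ B(x,s)}`. -/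
noncomputable def tauRet (T : X → X) (s : ℝ) (x : X) : ℕ :=
  sInf {k : ℕ | 0 < k ∧ T^[k] x ∈ ball x s}

/-- The lower recurrence rate `R̲(x) = liminf_{s→0⁺} log τ_s(x) / (-log s)`. -/
noncomputable def Rlower (T : X → X) (x : X) : EReal :=
  liminf (fun s : ℝ =>
    ((Real.log (tauRet T s x : ℝ) / (-Real.log s) : ℝ) : EReal)) (𝓝[>] (0 : ℝ))

open Classical in
/-- The lower local dimension `d̲_μ(x) = liminf_{ε→0⁺} log μ(B(x,ε)) / log ε` when all balls
around `x` have positive measure, and `+∞` otherwise. -/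
noncomputable def dLoc (μ : Measure X) (x : X) : EReal :=
  if (∀ ε > 0, 0 < μ (ball x ε)) then
    liminf (fun ε : ℝ =>
      ((Real.log (μ (ball x ε)).toReal / Real.log ε : ℝ) : EReal)) (𝓝[>] (0 : ℝ))
  else ⊤

/-- The auxiliary continuous kernel `f^ε_x(y)`: equal to `1` if `dist x y ≤ ε`, to
`2 - dist x y / ε` if `ε ≤ dist x y ≤ 2ε`, and to `0` if `dist x y ≥ 2ε`. -/
noncomputable def fker (ε : ℝ) (x y : X) : ℝ :=
  if dist x y ≤ ε then 1 else if dist x y ≤ 2 * ε then 2 - dist x y / ε else 0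

/-- `f_ε(μ, x) = ∫ f^ε_x(y) dμ(y)`. -/
noncomputable def feps (ε : ℝ) (μ : Measure X) (x : X) : ℝ := ∫ y, fker ε x y ∂μ

/-- `G` is a finite covering of `X` by open balls of radius `ε` (given by its finite set of
centers). -/
def IsBallCover (ε : ℝ) (G : Finset X) : Prop := (⋃ x ∈ G, ball x ε) = univ

/-- `S_μ(s,ε) = inf_G ∑_{x ∈ G} μ(B(x,ε))^s`, the infimum running over all finite coverings of
`X` by balls of radius `ε`. -/
noncomputable def Sfun (μ : Measure X) (s ε : ℝ) : ℝ :=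
  ⨅ G : {H : Finset X // IsBallCover ε H}, ∑ x ∈ G.val, (μ (ball x ε)).toReal ^ s

/-- `W_μ(s,ε) = inf_G ∑_{x ∈ G} f_ε(μ,x)^s`, the infimum running over all finite coverings of
`X` by balls of radius `ε`. -/
noncomputable def Wfun (μ : Measure X) (s ε : ℝ) : ℝ :=
  ⨅ G : {H : Finset X // IsBallCover ε H}, ∑ x ∈ G.val, (feps ε μ x) ^ s

/-- The regularized energy function `J_μ(q,ε) = ∫ f_ε(μ,x)^(q-1) dμ(x)`. -/
noncomputable def Jfun (μ : Measure X) (q ε : ℝ) : ℝ :=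
  ∫ x, (feps ε μ x) ^ (q - 1) ∂μ

end Defs

section Shift

variable {M : Type*} [MetricSpace M]

/-- The "cylinder ball" `B^n(x,ε) = {y | d(x_i, y_i) < ε for all |i| ≤ n}` in `M^ℤ`. -/
def cylBall (n : ℕ) (x : ℤ → M) (ε : ℝ) : Set (ℤ → M) :=
  {y : ℤ → M | ∀ i : ℤ, |i| ≤ (n : ℤ) → dist (x i) (y i) < ε}

/-- For `ε ∈ (0,1)`, the largest integer `n ≥ 0` with `ε < 1/(n²+1)`. -/
noncomputable def nZero (ε : ℝ) : ℕ := sSup {n : ℕ | ε < 1 / ((n : ℝ) ^ 2 + 1)}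

/-- The modified energy function `I^n_μ(q,ε) = ∫ μ(B^n(x,ε))^(q-1) dμ(x)`. -/
noncomputable def Icyl [MeasurableSpace (ℤ → M)] (μ : Measure (ℤ → M)) (n : ℕ) (q ε : ℝ) :
    ℝ :=
  ∫ x, (μ (cylBall n x ε)).toReal ^ (q - 1) ∂μ

end Shift

section Aux

variable {X : Type*} [MetricSpace X] [MeasurableSpace X]

lemma aux_isClosed_msupp (μ : Measure X) : IsClosed (msupp μ) := by
  rw [← isOpen_compl_iff, Metric.isOpen_iff]
  intro x hx
  rw [mem_compl_iff, msupp, mem_setOf_eq] at hx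
  push_neg at hx
  obtain ⟨ε, hε, h0⟩ := hx
  refine ⟨ε / 2, by linarith, ?_⟩
  intro y hy
  rw [mem_compl_iff, msupp, mem_setOf_eq]
  push_neg
  refine ⟨ε / 2, by linarith, ?_⟩
  have hsub : ball y (ε / 2) ⊆ ball x ε := by
    intro z hz
    rw [mem_ball] at hz hy ⊢
    calc dist z x ≤ dist z y + dist y x := dist_triangle _ _ _
      _ < ε / 2 + ε / 2 := add_lt_add hz hy
      _ = ε := by ring
  exact le_trans (measure_mono hsub) h0

lemma aux_msupp_compl_null [SecondCountableTopology X] (μ : Measure X) :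
    μ (msupp μ)ᶜ = 0 := by
  obtain ⟨T, hTc, hTS, hTU⟩ :=
    TopologicalSpace.isOpen_sUnion_countable {U : Set X | IsOpen U ∧ μ U = 0}
      (fun U hU => hU.1)
  have h0 : μ (⋃₀ {U : Set X | IsOpen U ∧ μ U = 0}) = 0 := by
    rw [← hTU]
    exact (measure_sUnion_null_iff hTc).2 fun t ht => (hTS ht).2
  refine measure_mono_null ?_ h0
  intro x hx
  rw [mem_compl_iff, msupp, mem_setOf_eq] at hx
  push_neg at hx
  obtain ⟨ε, hε, h⟩ := hx
  exact ⟨ball x ε, ⟨isOpen_ball, le_antisymm h zero_le⟩, mem_ball_self hε⟩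

lemma aux_msupp_one [SecondCountableTopology X] [OpensMeasurableSpace X]
    (μ : Measure X) [IsProbabilityMeasure μ] : μ (msupp μ) = 1 := by
  rw [← prob_compl_eq_zero_iff (aux_isClosed_msupp μ).measurableSet]
  exact aux_msupp_compl_null μ

/-- Subadditivity of set integrals of a nonnegative function over a finite union. -/
lemma aux_setIntegral_biUnion_le {ι : Type*} (μ : Measure X) (f : X → ℝ)
    (hf : ∀ x, 0 ≤ f x) (t : Finset ι) (D : ι → Set X) (hD : ∀ i, MeasurableSet (D i))
    (hInt : IntegrableOn f (⋃ i ∈ t, D i) μ) :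
    ∫ x in (⋃ i ∈ t, D i), f x ∂μ ≤ ∑ i ∈ t, ∫ x in D i, f x ∂μ := by
  classical
  induction t using Finset.induction_on with
  | empty => simp
  | @insert a u ha ih =>
    rw [Finset.set_biUnion_insert] at hInt ⊢
    rw [Finset.sum_insert ha]
    set U : Set X := ⋃ i ∈ u, D i with hU
    have hUmeas : MeasurableSet U := MeasurableSet.biUnion u.countable_toSet (fun i _ => hD i)
    have hsplit : D a ∪ U = D a ∪ (U \ D a) := by rw [union_diff_self]
    have hIa : IntegrableOn f (D a) μ := hInt.mono_set subset_union_left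
    have hIU : IntegrableOn f U μ := hInt.mono_set subset_union_right
    have hIUd : IntegrableOn f (U \ D a) μ := hIU.mono_set diff_subset
    have h1 : ∫ x in D a ∪ U, f x ∂μ
        = ∫ x in D a, f x ∂μ + ∫ x in U \ D a, f x ∂μ := by
      rw [hsplit]
      exact setIntegral_union disjoint_sdiff_right (hUmeas.diff (hD a)) hIa hIUd
    have h2 : ∫ x in U \ D a, f x ∂μ ≤ ∫ x in U, f x ∂μ :=
      setIntegral_mono_set hIU (Eventually.of_forall hf)
        (HasSubset.Subset.eventuallyLE diff_subset)
    calc ∫ x in D a ∪ U, f x ∂μ ≤ ∫ x in D a, f x ∂μ + ∫ x in U, f x ∂μ := by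
          rw [h1]; exact add_le_add_right h2 _
      _ ≤ ∫ x in D a, f x ∂μ + ∑ i ∈ u, ∫ x in D i, f x ∂μ :=
          add_le_add_right (ih hIU) _

/-- The key energy estimate. -/
lemma aux_energy_bound [BorelSpace X] (μ : Measure X) [IsProbabilityMeasure μ]
    {s ε c δ : ℝ} (hs : s ∈ Ioo (0 : ℝ) 1) (hε : 0 < ε) (hc : 0 < c) (hδ : 0 < δ)
    (P : Finset X)
    (h1 : ∀ o ∈ P, ENNReal.ofReal c < μ (ball o ε))
    (h2 : μ (Metric.thickening ε (P : Set X))ᶜ < ENNReal.ofReal δ)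
    (t : Finset X) (ht : (⋃ z ∈ t, ball z ε) = univ) :
    energyI μ s (2 * ε) ≤ c ^ (s - 1) + t.card * δ ^ s := by
  classical
  have hs1 : s - 1 ≤ 0 := by linarith [hs.2]
  set f : X → ℝ := fun x => (μ (ball x (2 * ε))).toReal ^ (s - 1) with hfdef
  have hf0 : ∀ x, 0 ≤ f x := fun x => Real.rpow_nonneg ENNReal.toReal_nonneg _
  have hRHS : (0 : ℝ) ≤ c ^ (s - 1) + t.card * δ ^ s := by
    have := Real.rpow_nonneg hc.le (s - 1)
    have := Real.rpow_nonneg hδ.le s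
    positivity
  by_cases hInt : IntegrableOn f (msupp μ) μ
  · set V : Set X := Metric.thickening ε (P : Set X) with hVdef
    have hVopen : IsOpen V := Metric.isOpen_thickening
    have hmm : MeasurableSet (msupp μ) := (aux_isClosed_msupp μ).measurableSet
    have hA : MeasurableSet (msupp μ ∩ V) := hmm.inter hVopen.measurableSet
    have hB : MeasurableSet (msupp μ \ V) := hmm.diff hVopen.measurableSet
    have hgeo : ∀ x z : X, dist x z < ε → ball z ε ⊆ ball x (2 * ε) := by
      intro x z h y hy
      rw [mem_ball] at hy ⊢
      calc dist y x ≤ dist y z + dist z x := dist_triangle _ _ _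
        _ < ε + ε := add_lt_add hy (by rwa [dist_comm])
        _ = 2 * ε := by ring
    -- part A
    have hAbound : ∫ x in msupp μ ∩ V, f x ∂μ ≤ c ^ (s - 1) := by
      have hle : ∀ x ∈ msupp μ ∩ V, f x ≤ c ^ (s - 1) := by
        intro x hx
        obtain ⟨o, hoP, hxo⟩ := Metric.mem_thickening_iff.1 hx.2
        have hmem : ENNReal.ofReal c < μ (ball x (2 * ε)) :=
          lt_of_lt_of_le (h1 o hoP) (measure_mono (hgeo x o hxo))
        have hc' : c ≤ (μ (ball x (2 * ε))).toReal :=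
          ((ENNReal.ofReal_lt_iff_lt_toReal hc.le (measure_ne_top μ _)).1 hmem).le
        exact Real.rpow_le_rpow_of_nonpos hc hc' hs1
      calc ∫ x in msupp μ ∩ V, f x ∂μ ≤ ∫ _x in msupp μ ∩ V, c ^ (s - 1) ∂μ :=
            setIntegral_mono_on (hInt.mono_set inter_subset_left)
              (integrableOn_const (measure_ne_top μ _)) hA hle
        _ = (μ (msupp μ ∩ V)).toReal • c ^ (s - 1) := setIntegral_const _
        _ ≤ 1 * c ^ (s - 1) := by
            rw [smul_eq_mul]
            apply mul_le_mul_of_nonneg_right _ (Real.rpow_nonneg hc.le _)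
            exact ENNReal.toReal_le_of_le_ofReal one_pos.le
              (by simpa using prob_le_one (μ := μ) (s := msupp μ ∩ V))
        _ = c ^ (s - 1) := one_mul _
    -- part B
    set B : Set X := msupp μ \ V with hBdef
    have hIntB : IntegrableOn f B μ := hInt.mono_set diff_subset
    have hBeq : B = ⋃ z ∈ t, (B ∩ ball z ε) := by
      rw [← inter_iUnion₂, ht, inter_univ]
    have hBbound : ∫ x in B, f x ∂μ ≤ t.card * δ ^ s := by
      have hterm : ∀ z ∈ t, ∫ x in B ∩ ball z ε, f x ∂μ ≤ δ ^ s := by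
        intro z _
        set C : Set X := B ∩ ball z ε with hCdef
        rcases eq_or_ne (μ C) 0 with h0 | hne
        · rw [Measure.restrict_eq_zero.2 h0, integral_zero_measure]
          exact (Real.rpow_nonneg hδ.le s)
        · have hCne : μ C ≠ ⊤ := measure_ne_top μ _
          have haux : μ C < ENNReal.ofReal δ :=
            lt_of_le_of_lt (measure_mono (fun x hx => hx.1.2)) h2
          have haR : (μ C).toReal < δ := (ENNReal.lt_ofReal_iff_toReal_lt hCne).1 haux
          have ha0 : 0 < (μ C).toReal := ENNReal.toReal_pos hne hCne
          have hpt : ∀ x ∈ C, f x ≤ (μ C).toReal ^ (s - 1) := by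
            intro x hx
            have hsub : C ⊆ ball x (2 * ε) := by
              refine subset_trans inter_subset_right (hgeo x z ?_)
              exact mem_ball.1 hx.2
            have : (μ C).toReal ≤ (μ (ball x (2 * ε))).toReal :=
              ENNReal.toReal_mono (measure_ne_top μ _) (measure_mono hsub)
            exact Real.rpow_le_rpow_of_nonpos ha0 this hs1
          have hCmeas : MeasurableSet C := (hB.inter measurableSet_ball)
          calc ∫ x in C, f x ∂μ ≤ ∫ _x in C, (μ C).toReal ^ (s - 1) ∂μ :=
                setIntegral_mono_on (hIntB.mono_set inter_subset_left)
                  (integrableOn_const (measure_ne_top μ _)) hCmeas hpt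
            _ = (μ C).toReal • (μ C).toReal ^ (s - 1) := setIntegral_const _
            _ = (μ C).toReal ^ s := by
                rw [smul_eq_mul, ← Real.rpow_one_add' ha0.le
                  (by have := hs.1; intro h; linarith : (1 : ℝ) + (s - 1) ≠ 0)]
                congr 1
                ring
            _ ≤ δ ^ s := Real.rpow_le_rpow ha0.le haR.le hs.1.le
      calc ∫ x in B, f x ∂μ = ∫ x in (⋃ z ∈ t, (B ∩ ball z ε)), f x ∂μ := by rw [← hBeq]
        _ ≤ ∑ z ∈ t, ∫ x in B ∩ ball z ε, f x ∂μ := by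
            refine aux_setIntegral_biUnion_le μ f hf0 t _
              (fun z => hB.inter measurableSet_ball) ?_
            rw [← hBeq]; exact hIntB
        _ ≤ ∑ _z ∈ t, δ ^ s := Finset.sum_le_sum hterm
        _ = t.card * δ ^ s := by rw [Finset.sum_const, nsmul_eq_mul]
    -- combine
    have hsplit : msupp μ = (msupp μ ∩ V) ∪ B := (inter_union_diff (msupp μ) V).symm
    have hdisj : Disjoint (msupp μ ∩ V) B := by
      refine Set.disjoint_left.2 ?_
      rintro x ⟨-, hxV⟩ ⟨-, hxV'⟩
      exact hxV' hxV
    calc energyI μ s (2 * ε) = ∫ x in (msupp μ ∩ V) ∪ B, f x ∂μ := by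
          rw [energyI, ← hsplit]
      _ = ∫ x in msupp μ ∩ V, f x ∂μ + ∫ x in B, f x ∂μ :=
          setIntegral_union hdisj hB (hInt.mono_set inter_subset_left) hIntB
      _ ≤ c ^ (s - 1) + t.card * δ ^ s := add_le_add hAbound hBbound
  · rw [energyI, integral_undef hInt]
    exact hRHS

set_option maxHeartbeats 1000000 in
/-- Around every periodic measure there is an open set of invariant measures whose energy
function is small at some small scale. -/
lemma aux_exists_open {X : Type*} [MetricSpace X] [CompactSpace X] [MeasurableSpace X]
    [BorelSpace X] (T : X → X) {s : ℝ} (hs : s ∈ Ioo (0 : ℝ) 1) (n : ℕ)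
    (ν : ↥(invSet T)) (hν : IsPeriodicMeasure T ν.val) :
    ∃ O : Set ↥(invSet T), IsOpen O ∧ ν ∈ O ∧
      ∀ μ : ↥(invSet T), μ ∈ O → ∃ ε' : ℝ, 0 < ε' ∧ ε' < 1 / ((n : ℝ) + 1) ∧ ε' < 1 ∧
        energyI μ.val.toMeasure s ε' < ε' ^ ((s - 1) / ((n : ℝ) + 1)) := by
  classical
  obtain ⟨x, p, hp, hTx, hmeas⟩ := hν
  have hpR : (0 : ℝ) < p := Nat.cast_pos.2 hp
  set P : Finset X := (Finset.range p).image (fun i => T^[i] x) with hP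
  have hPmem : ∀ i, i < p → T^[i] x ∈ (P : Set X) := by
    intro i hi
    simp only [hP, Finset.coe_image, Finset.coe_range, mem_image, mem_Iio]
    exact ⟨i, hi, rfl⟩
  -- measure of atoms
  have hatom : ∀ o ∈ P, ((p : ℝ≥0∞))⁻¹ ≤ ν.val.toMeasure {o} := by
    intro o ho
    obtain ⟨i, hi, rfl⟩ := Finset.mem_image.1 ho
    rw [hmeas, Measure.smul_apply, smul_eq_mul]
    have h1 : (1 : ℝ≥0∞) ≤ (∑ j ∈ Finset.range p, Measure.dirac (T^[j] x)) {T^[i] x} := by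
      rw [Measure.finset_sum_apply]
      calc (1 : ℝ≥0∞) = Measure.dirac (T^[i] x) {T^[i] x} :=
            (Measure.dirac_apply_of_mem (mem_singleton _)).symm
        _ ≤ ∑ j ∈ Finset.range p, Measure.dirac (T^[j] x) {T^[i] x} :=
            Finset.single_le_sum (f := fun j => Measure.dirac (T^[j] x) {T^[i] x})
              (fun j _ => zero_le) hi
    calc ((p : ℝ≥0∞))⁻¹ = (p : ℝ≥0∞)⁻¹ * 1 := (mul_one _).symm
      _ ≤ _ := mul_le_mul_right h1 _
  have hmeasP : MeasurableSet (P : Set X) := P.finite_toSet.isClosed.measurableSet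
  have hPfull : ν.val.toMeasure (P : Set X) = 1 := by
    have hPc : ν.val.toMeasure ((P : Set X))ᶜ = 0 := by
      rw [hmeas, Measure.smul_apply, smul_eq_mul, Measure.finset_sum_apply]
      have hz : ∀ j ∈ Finset.range p, Measure.dirac (T^[j] x) ((P : Set X))ᶜ = 0 := by
        intro j hj
        rw [Measure.dirac_apply' _ hmeasP.compl]
        exact indicator_of_notMem (by simp [hPmem j (Finset.mem_range.1 hj)]) _
      rw [Finset.sum_congr rfl hz]
      simp
    exact (prob_compl_eq_zero_iff hmeasP).1 hPc
  -- numeric choices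
  have hs1 : s - 1 < 0 := by linarith [hs.2]
  have hn1 : (0 : ℝ) < (n : ℝ) + 1 := by positivity
  set q : ℝ := (s - 1) / ((n : ℝ) + 1) with hqdef
  have hq0 : q < 0 := div_neg_of_neg_of_pos hs1 hn1
  set c : ℝ := 1 / (2 * p) with hcdef
  have hc0 : 0 < c := by positivity
  set M : ℝ := c ^ (s - 1) with hMdef
  have hM0 : 0 < M := Real.rpow_pos_of_pos hc0 _
  have hMq : 0 < (M + 1) ^ (1 / q) := Real.rpow_pos_of_pos (by linarith) _
  set ε' : ℝ := min (1 / (2 * ((n : ℝ) + 1))) (min (1 / 2) ((M + 1) ^ (1 / q) / 2)) with hε'def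
  have hε'0 : 0 < ε' := lt_min (by positivity) (lt_min (by norm_num) (by positivity))
  have hε'1 : ε' < 1 :=
    lt_of_le_of_lt (le_trans (min_le_right _ _) (min_le_left _ _)) (by norm_num)
  have hε'n : ε' < 1 / ((n : ℝ) + 1) := by
    apply lt_of_le_of_lt (min_le_left _ _)
    exact one_div_lt_one_div_of_lt hn1 (by linarith)
  have hthr : M + 1 < ε' ^ q := by
    have h1 : ε' < (M + 1) ^ (1 / q) :=
      lt_of_le_of_lt (le_trans (min_le_right _ _) (min_le_right _ _)) (half_lt_self hMq)
    have h2 : ((M + 1) ^ (1 / q)) ^ q < ε' ^ q := Real.rpow_lt_rpow_of_neg hε'0 h1 hq0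
    calc M + 1 = ((M + 1) ^ (1 / q)) ^ q := by
          rw [← Real.rpow_mul (by linarith : (0 : ℝ) ≤ M + 1), one_div_mul_cancel hq0.ne,
            Real.rpow_one]
      _ < ε' ^ q := h2
  set ε : ℝ := ε' / 2 with hεdef
  have hε0 : 0 < ε := by positivity
  have h2ε : 2 * ε = ε' := by rw [hεdef]; ring
  -- covering
  obtain ⟨t, ht⟩ := isCompact_univ.elim_finite_subcover (fun z : X => ball z ε)
      (fun z => isOpen_ball) (fun y _ => mem_iUnion.2 ⟨y, mem_ball_self hε0⟩)
  have htU : (⋃ z ∈ t, ball z ε) = univ := eq_univ_of_univ_subset ht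
  set N : ℕ := t.card with hNdef
  have hN1 : (0 : ℝ) < (N : ℝ) + 1 := by
    have := Nat.cast_nonneg (α := ℝ) N
    linarith
  set δ : ℝ := (1 / ((N : ℝ) + 1)) ^ (1 / s) / 2 with hδdef
  have hδbase : (0 : ℝ) < (1 / ((N : ℝ) + 1)) ^ (1 / s) :=
    Real.rpow_pos_of_pos (one_div_pos.2 hN1) _
  have hδ0 : 0 < δ := by rw [hδdef]; exact div_pos hδbase two_pos
  have hNδ : (N : ℝ) * δ ^ s < 1 := by
    have h1 : δ < (1 / ((N : ℝ) + 1)) ^ (1 / s) := half_lt_self hδbase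
    have h2 : δ ^ s < ((1 / ((N : ℝ) + 1)) ^ (1 / s)) ^ s :=
      Real.rpow_lt_rpow hδ0.le h1 hs.1
    have h3 : ((1 / ((N : ℝ) + 1)) ^ (1 / s)) ^ s = 1 / ((N : ℝ) + 1) := by
      rw [← Real.rpow_mul (one_div_pos.2 hN1).le, one_div_mul_cancel (ne_of_gt hs.1),
        Real.rpow_one]
    calc (N : ℝ) * δ ^ s ≤ (N : ℝ) * (1 / ((N : ℝ) + 1)) := by
          apply mul_le_mul_of_nonneg_left _ (Nat.cast_nonneg N)
          rw [← h3]; exact h2.le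
      _ < 1 := by
          rw [mul_one_div]
          exact (div_lt_one hN1).2 (by linarith)
  -- bridging facts about test function integrals
  have hbridge : ∀ (μ : ProbabilityMeasure X) (E : Set X),
      ((μ.toFiniteMeasure.testAgainstNN (thickenedIndicator hε0 E)) : ℝ)
        = (∫⁻ y, (thickenedIndicator hε0 E y : ℝ≥0∞) ∂μ.toMeasure).toReal := by
    intro μ E
    have := FiniteMeasure.testAgainstNN_coe_eq
      (μ := μ.toFiniteMeasure) (f := thickenedIndicator hε0 E)
    calc ((μ.toFiniteMeasure.testAgainstNN (thickenedIndicator hε0 E)) : ℝ)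
        = (((μ.toFiniteMeasure.testAgainstNN (thickenedIndicator hε0 E)) : ℝ≥0∞)).toReal := by
          rw [ENNReal.coe_toReal]
      _ = _ := by rw [this]; rfl
  have hlint_le : ∀ (μ : ProbabilityMeasure X) (E : Set X),
      ∫⁻ y, (thickenedIndicator hε0 E y : ℝ≥0∞) ∂μ.toMeasure
        ≤ μ.toMeasure (Metric.thickening ε E) := by
    intro μ E
    apply lintegral_le_meas
    · intro a
      exact_mod_cast thickenedIndicator_le_one hε0 E a
    · intro a ha
      have : thickenedIndicator hε0 E a = 0 := thickenedIndicator_zero hε0 E ha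
      rw [this]; rfl
  have hlint_ne_top : ∀ (μ : ProbabilityMeasure X) (E : Set X),
      ∫⁻ y, (thickenedIndicator hε0 E y : ℝ≥0∞) ∂μ.toMeasure ≠ ⊤ := by
    intro μ E
    exact ne_top_of_le_ne_top (measure_ne_top _ _) (hlint_le μ E)
  -- the open set
  set O1 : Set (ProbabilityMeasure X) := ⋂ o ∈ P,
    {μ : ProbabilityMeasure X |
      c < ((μ.toFiniteMeasure.testAgainstNN (thickenedIndicator hε0 ({o} : Set X))) : ℝ)} with hO1
  set O2 : Set (ProbabilityMeasure X) :=
    {μ : ProbabilityMeasure X |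
      1 - δ < ((μ.toFiniteMeasure.testAgainstNN (thickenedIndicator hε0 (P : Set X))) : ℝ)}
    with hO2
  have hO1open : IsOpen O1 := by
    refine isOpen_biInter_finset fun o _ => ?_
    exact isOpen_lt continuous_const
      (NNReal.continuous_coe.comp (ProbabilityMeasure.continuous_testAgainstNN_eval _))
  have hO2open : IsOpen O2 :=
    isOpen_lt continuous_const
      (NNReal.continuous_coe.comp (ProbabilityMeasure.continuous_testAgainstNN_eval _))
  refine ⟨Subtype.val ⁻¹' (O1 ∩ O2), ((hO1open.inter hO2open).preimage continuous_subtype_val),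
    ?_, ?_⟩
  · -- ν belongs
    constructor
    · rw [hO1]
      refine mem_iInter₂.2 fun o ho => ?_
      rw [mem_setOf_eq, hbridge]
      have hle : ν.val.toMeasure {o}
          ≤ ∫⁻ y, (thickenedIndicator hε0 ({o} : Set X) y : ℝ≥0∞) ∂ν.val.toMeasure :=
        measure_le_lintegral_thickenedIndicator _ isClosed_singleton.measurableSet hε0
      have h1 : ((p : ℝ≥0∞))⁻¹.toReal
          ≤ (∫⁻ y, (thickenedIndicator hε0 ({o} : Set X) y : ℝ≥0∞) ∂ν.val.toMeasure).toReal :=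
        ENNReal.toReal_mono (hlint_ne_top _ _) (le_trans (hatom o ho) hle)
      have h2 : ((p : ℝ≥0∞))⁻¹.toReal = 1 / (p : ℝ) := by
        rw [ENNReal.toReal_inv, ENNReal.toReal_natCast, one_div]
      have h3 : c < 1 / (p : ℝ) := one_div_lt_one_div_of_lt hpR (by linarith)
      rw [h2] at h1
      linarith
    · rw [hO2, mem_setOf_eq, hbridge]
      have hle : ν.val.toMeasure (P : Set X)
          ≤ ∫⁻ y, (thickenedIndicator hε0 (P : Set X) y : ℝ≥0∞) ∂ν.val.toMeasure :=
        measure_le_lintegral_thickenedIndicator _ hmeasP hε0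
      have h1 : (ν.val.toMeasure (P : Set X)).toReal
          ≤ (∫⁻ y, (thickenedIndicator hε0 (P : Set X) y : ℝ≥0∞) ∂ν.val.toMeasure).toReal :=
        ENNReal.toReal_mono (hlint_ne_top _ _) hle
      rw [hPfull] at h1
      simp only [ENNReal.toReal_one] at h1
      linarith
  · -- the estimate on the open set
    intro μ hμ
    obtain ⟨hμ1, hμ2⟩ := hμ
    have h1 : ∀ o ∈ P, ENNReal.ofReal c < μ.val.toMeasure (ball o ε) := by
      intro o ho
      have hx1 : c < ((μ.val.toFiniteMeasure.testAgainstNN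
          (thickenedIndicator hε0 ({o} : Set X))) : ℝ) := by
        have := mem_iInter₂.1 hμ1 o ho
        exact this
      rw [hbridge] at hx1
      have hx2 : (∫⁻ y, (thickenedIndicator hε0 ({o} : Set X) y : ℝ≥0∞) ∂μ.val.toMeasure).toReal
          ≤ (μ.val.toMeasure (Metric.thickening ε ({o} : Set X))).toReal :=
        ENNReal.toReal_mono (measure_ne_top _ _) (hlint_le _ _)
      rw [Metric.thickening_singleton] at hx2
      rw [ENNReal.ofReal_lt_iff_lt_toReal hc0.le (measure_ne_top _ _)]
      linarith
    have h2 : μ.val.toMeasure (Metric.thickening ε (P : Set X))ᶜ < ENNReal.ofReal δ := by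
      have hx1 : 1 - δ < ((μ.val.toFiniteMeasure.testAgainstNN
          (thickenedIndicator hε0 (P : Set X))) : ℝ) := hμ2
      rw [hbridge] at hx1
      have hx2 : (∫⁻ y, (thickenedIndicator hε0 (P : Set X) y : ℝ≥0∞) ∂μ.val.toMeasure).toReal
          ≤ (μ.val.toMeasure (Metric.thickening ε (P : Set X))).toReal :=
        ENNReal.toReal_mono (measure_ne_top _ _) (hlint_le _ _)
      set V : Set X := Metric.thickening ε (P : Set X) with hVdef
      have hadd : μ.val.toMeasure V + μ.val.toMeasure Vᶜ = 1 := by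
        rw [measure_add_measure_compl Metric.isOpen_thickening.measurableSet, measure_univ]
      have haddR : (μ.val.toMeasure V).toReal + (μ.val.toMeasure Vᶜ).toReal = 1 := by
        rw [← ENNReal.toReal_add (measure_ne_top _ _) (measure_ne_top _ _), hadd,
          ENNReal.toReal_one]
      rw [ENNReal.lt_ofReal_iff_toReal_lt (measure_ne_top _ _)]
      linarith
    have hkey := aux_energy_bound μ.val.toMeasure hs hε0 hc0 hδ0 P h1 h2 t htU
    refine ⟨ε', hε'0, hε'n, hε'1, ?_⟩
    rw [← h2ε]
    calc energyI μ.val.toMeasure s (2 * ε) ≤ c ^ (s - 1) + t.card * δ ^ s := hkey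
      _ = M + (N : ℝ) * δ ^ s := by rw [hMdef, hNdef]
      _ < M + 1 := by linarith
      _ < (2 * ε) ^ q := by rw [h2ε]; exact hthr

/-- If the energy function is subpolynomially small at arbitrarily small scales, then the lower
`s`-generalized fractal dimension vanishes. -/
lemma aux_dlower_eq_zero {X : Type*} [MetricSpace X] [CompactSpace X] [MeasurableSpace X]
    [BorelSpace X] (μ : Measure X) [IsProbabilityMeasure μ] {s : ℝ} (hs : s ∈ Ioo (0 : ℝ) 1)
    (H : ∀ n : ℕ, ∃ ε' : ℝ, 0 < ε' ∧ ε' < 1 / ((n : ℝ) + 1) ∧ ε' < 1 ∧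
      energyI μ s ε' < ε' ^ ((s - 1) / ((n : ℝ) + 1))) :
    Dlower μ s = 0 := by
  have hs1 : s - 1 < 0 := by linarith [hs.2]
  -- the lower bound: the quotient is nonnegative on (0,1)
  have hlow : ∀ ε ∈ Ioo (0 : ℝ) 1,
      0 ≤ Real.log (energyI μ s ε) / ((s - 1) * Real.log ε) := by
    intro ε hε
    refine div_nonneg ?_ (by nlinarith [Real.log_nonpos hε.1.le hε.2.le] :
      (0 : ℝ) ≤ (s - 1) * Real.log ε)
    by_cases hInt : IntegrableOn (fun y => (μ (ball y ε)).toReal ^ (s - 1)) (msupp μ) μ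
    · apply Real.log_nonneg
      have h1 : ∫ _y in msupp μ, (1 : ℝ) ∂μ ≤ energyI μ s ε := by
        rw [energyI]
        refine setIntegral_mono_on (integrableOn_const (measure_ne_top μ _)) hInt
          (aux_isClosed_msupp μ).measurableSet ?_
        intro y hy
        have h0 : 0 < (μ (ball y ε)).toReal :=
          ENNReal.toReal_pos (ne_of_gt (hy ε hε.1)) (measure_ne_top μ _)
        have hle1 : (μ (ball y ε)).toReal ≤ 1 := by
          have := ENNReal.toReal_mono (ENNReal.one_ne_top) (prob_le_one (μ := μ) (s := ball y ε))
          simpa using this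
        exact Real.one_le_rpow_of_pos_of_le_one_of_nonpos h0 hle1 hs1.le
      have h2 : ∫ _y in msupp μ, (1 : ℝ) ∂μ = 1 := by
        rw [setIntegral_const, measureReal_def, aux_msupp_one μ]
        simp
      linarith
    · rw [energyI, integral_undef hInt, Real.log_zero]
  have hDlow : (0 : EReal) ≤ Dlower μ s := by
    rw [Dlower]
    have hconst : (0 : EReal) = liminf (fun _ : ℝ => (0 : EReal)) (𝓝[>] (0 : ℝ)) :=
      (liminf_const _).symm
    rw [hconst]
    exact liminf_le_liminf (by
      filter_upwards [Ioo_mem_nhdsGT one_pos] with ε hε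
      exact EReal.coe_nonneg.2 (hlow ε hε))
  -- the upper bound
  have hupp : ∀ r : ℝ, 0 < r → Dlower μ s ≤ (r : EReal) := by
    intro r hr
    rw [Dlower]
    apply liminf_le_of_frequently_le'
    rw [Filter.frequently_iff]
    intro U hU
    obtain ⟨a, ha, haU⟩ := mem_nhdsGT_iff_exists_Ioo_subset.1 hU
    obtain ⟨m, hm⟩ := exists_nat_one_div_lt (lt_min (mem_Ioi.1 ha) hr)
    obtain ⟨ε', h0, hlt, hlt1, hE⟩ := H m
    refine ⟨ε', haU ⟨h0, lt_trans hlt (lt_of_lt_of_le hm (min_le_left _ _))⟩, ?_⟩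
    rw [EReal.coe_le_coe_iff]
    have hm1 : (0 : ℝ) < (m : ℝ) + 1 := by positivity
    set q : ℝ := (s - 1) / ((m : ℝ) + 1) with hqdef
    have hq0 : q < 0 := div_neg_of_neg_of_pos hs1 hm1
    have hlog : Real.log ε' < 0 := Real.log_neg h0 hlt1
    have hden : 0 < (s - 1) * Real.log ε' := mul_pos_of_neg_of_neg hs1 hlog
    have hnum : Real.log (energyI μ s ε') < q * Real.log ε' := by
      have hEnn : 0 ≤ energyI μ s ε' := by
        rw [energyI]
        exact integral_nonneg fun y => Real.rpow_nonneg ENNReal.toReal_nonneg _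
      rcases hEnn.eq_or_lt with h0' | hpos
      · rw [← h0', Real.log_zero]
        exact mul_pos_of_neg_of_neg hq0 hlog
      · calc Real.log (energyI μ s ε') < Real.log (ε' ^ q) := Real.log_lt_log hpos hE
          _ = q * Real.log ε' := Real.log_rpow h0 q
    rw [div_le_iff₀ hden]
    have h4 : q * Real.log ε' = ((s - 1) * Real.log ε') * (1 / ((m : ℝ) + 1)) := by
      rw [hqdef]
      field_simp
    have h5 : ((s - 1) * Real.log ε') * (1 / ((m : ℝ) + 1)) ≤ ((s - 1) * Real.log ε') * r :=
      mul_le_mul_of_nonneg_left (le_trans hm.le (min_le_right a r)) hden.le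
    calc Real.log (energyI μ s ε') ≤ q * Real.log ε' := hnum.le
      _ ≤ ((s - 1) * Real.log ε') * r := by rw [h4]; exact h5
      _ = r * ((s - 1) * Real.log ε') := mul_comm _ _
  -- combine
  refine le_antisymm ?_ hDlow
  by_contra hcon
  push_neg at hcon
  have h1 : Dlower μ s ≤ ((1 : ℝ) : EReal) := hupp 1 one_pos
  obtain ⟨y, hy0, hyD⟩ := exists_between hcon
  have hytop : y ≠ ⊤ := ne_top_of_lt (lt_of_lt_of_le hyD h1)
  have hybot : y ≠ ⊥ := ne_bot_of_gt hy0
  have hyR : (y.toReal : EReal) = y := EReal.coe_toReal hytop hybot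
  have hy0R : 0 < y.toReal := by
    have h := hy0
    rw [← hyR, ← EReal.coe_zero, EReal.coe_lt_coe_iff] at h
    exact h
  have hfin := hupp y.toReal hy0R
  rw [hyR] at hfin
  exact absurd hyD (not_lt.2 hfin)

end Aux


/-- For a topological dynamical system `(X,T)` with the `T`-periodic measures
dense in `M(T)`, for each `s ∈ (0,1)` the set `{μ ∈ M(T) | D⁻_μ(s) = 0}` is residual in `M(T)`. -/
theorem statement0 {X : Type*} [MetricSpace X] [CompactSpace X]
    [MeasurableSpace X] [BorelSpace X]
    (T : X → X) (hT : Continuous T)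
    (hdense : Dense {μ : ↥(invSet T) | IsPeriodicMeasure T μ.val})
    (s : ℝ) (hs : s ∈ Ioo (0 : ℝ) 1) :
    {μ : ↥(invSet T) | Dlower μ.val.toMeasure s = (0 : EReal)} ∈ residual ↥(invSet T) := by
  classical
  have hex : ∀ n : ℕ, ∀ ν : ↥(invSet T), ∃ O : Set ↥(invSet T), IsOpen O ∧
      (IsPeriodicMeasure T ν.val → ν ∈ O) ∧
      ∀ μ : ↥(invSet T), μ ∈ O → ∃ ε' : ℝ, 0 < ε' ∧ ε' < 1 / ((n : ℝ) + 1) ∧ ε' < 1 ∧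
        energyI μ.val.toMeasure s ε' < ε' ^ ((s - 1) / ((n : ℝ) + 1)) := by
    intro n ν
    by_cases hν : IsPeriodicMeasure T ν.val
    · obtain ⟨O, h1, h2, h3⟩ := aux_exists_open T hs n ν hν
      exact ⟨O, h1, fun _ => h2, h3⟩
    · exact ⟨∅, isOpen_empty, fun h => absurd h hν, fun μ hμ => absurd hμ (notMem_empty μ)⟩
  choose O hOopen hOmem hOest using hex
  have hVopen : ∀ n : ℕ, IsOpen (⋃ ν, O n ν) := fun n => isOpen_iUnion (hOopen n)
  have hVdense : ∀ n : ℕ, Dense (⋃ ν, O n ν) := by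
    intro n
    apply hdense.mono
    intro ν hν
    exact mem_iUnion.2 ⟨ν, hOmem n ν hν⟩
  have hVres : ∀ n : ℕ, (⋃ ν, O n ν) ∈ residual ↥(invSet T) := fun n =>
    residual_of_dense_open (hVopen n) (hVdense n)
  refine mem_of_superset (countable_iInter_mem.2 hVres) ?_
  intro μ hμ
  rw [mem_iInter] at hμ
  have H : ∀ n : ℕ, ∃ ε' : ℝ, 0 < ε' ∧ ε' < 1 / ((n : ℝ) + 1) ∧ ε' < 1 ∧
      energyI μ.val.toMeasure s ε' < ε' ^ ((s - 1) / ((n : ℝ) + 1)) := by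
    intro n
    obtain ⟨ν, hν⟩ := mem_iUnion.1 (hμ n)
    exact hOest n ν μ hν
  exact aux_dlower_eq_zero μ.val.toMeasure hs H
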